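/- For any pairwise distinct i_1,…,i_r ∈ 𝕀 and any integers l_1,…,l_r ≥ 0, the numbers of fixed points satisfy P(D_{i_1} ≥ l_1, …, D_{i_r} ≥ l_r) = p_{i_1}^{l_1} ⋯ p_{i_r}^{l_r} if l_1 + ⋯ + l_r ≤ n, and P(D_{i_1} ≥ l_1, …, D_{i_r} ≥ l_r) = 0 otherwise. -/

import Mathlib

open MeasureTheory ProbabilityTheory
open scoped ENNReal

namespace Std8
open Finset
open scoped Classical ENNReal

section Comb

/-- strict "standardization" order on positions -/
def sl {n : ℕ} (w : Fin n → ℝ) (x y : Fin n) : Prop :=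
  w x < w y ∨ (w x = w y ∧ x < y)

/-- rank of position x -/
noncomputable def rk {n : ℕ} (w : Fin n → ℝ) (x : Fin n) : ℕ :=
  (univ.filter (fun y => sl w y x)).card

variable {n : ℕ} {w : Fin n → ℝ}

lemma sl_irrefl (x : Fin n) : ¬ sl w x x := by
  simp [sl]

lemma sl_trans {x y z : Fin n} (h1 : sl w x y) (h2 : sl w y z) : sl w x z := by
  rcases h1 with h1 | ⟨e1, l1⟩ <;> rcases h2 with h2 | ⟨e2, l2⟩
  · exact Or.inl (h1.trans h2)
  · exact Or.inl (e2 ▸ h1)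
  · exact Or.inl (e1 ▸ h2)
  · exact Or.inr ⟨e1.trans e2, l1.trans l2⟩

lemma sl_total (w : Fin n → ℝ) (x y : Fin n) (hne : x ≠ y) : sl w x y ∨ sl w y x := by
  rcases lt_trichotomy (w x) (w y) with h | h | h
  · exact Or.inl (Or.inl h)
  · rcases lt_or_gt_of_ne hne with h' | h'
    · exact Or.inl (Or.inr ⟨h, h'⟩)
    · exact Or.inr (Or.inr ⟨h.symm, h'⟩)
  · exact Or.inr (Or.inl h)

lemma rk_lt_rk {x y : Fin n} (h : sl w x y) : rk w x < rk w y := by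
  have hsub : insert x (univ.filter (fun z => sl w z x)) ⊆ univ.filter (fun z => sl w z y) := by
    intro z hz
    rcases Finset.mem_insert.1 hz with rfl | hz
    · simp [h]
    · simp only [mem_filter, mem_univ, true_and] at hz ⊢
      exact sl_trans hz h
  have hx : x ∉ univ.filter (fun z => sl w z x) := by simp [sl_irrefl]
  have h1 := Finset.card_le_card hsub
  rw [Finset.card_insert_of_notMem hx] at h1
  unfold rk
  omega

lemma sl_iff_rk_lt {x y : Fin n} : sl w x y ↔ rk w x < rk w y := by
  constructor
  · exact rk_lt_rk
  · intro h
    by_contra hs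
    rcases eq_or_ne x y with rfl | hne
    · omega
    · rcases sl_total w x y hne with h' | h'
      · exact hs h'
      · exact absurd (rk_lt_rk h') (by omega)

lemma rk_injective : Function.Injective (rk w) := by
  intro x y h
  by_contra hne
  rcases sl_total w x y hne with h' | h'
  · exact absurd (rk_lt_rk h') (by omega)
  · exact absurd (rk_lt_rk h') (by omega)

/-- the std permutation coincides with `rk` -/
lemma std_eq_rk (std : (Fin n → ℝ) → Equiv.Perm (Fin n))
    (hstd : ∀ (g : Fin n → ℝ) (j k : Fin n),
      std g j < std g k ↔ (g j < g k ∨ (g j = g k ∧ j < k)))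
    (g : Fin n → ℝ) (x : Fin n) : ((std g x : Fin n) : ℕ) = rk g x := by
  have h1 : (univ.filter (fun y => sl g y x)) = (univ.filter (fun y => std g y < std g x)) := by
    apply Finset.filter_congr
    intro y _
    exact (hstd g y x).symm
  have h2 : (univ.filter (fun y => std g y < std g x)).card
      = (univ.filter (fun b => b < std g x)).card := by
    apply Finset.card_bij (fun y _ => std g y)
    · intro a ha; simp only [mem_filter, mem_univ, true_and] at ha ⊢; exact ha
    · intro a _ b _ h; exact (std g).injective h
    · intro b hb
      refine ⟨(std g).symm b, ?_, by simp⟩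
      simp only [mem_filter, mem_univ, true_and] at hb ⊢
      simpa using hb
  have h3 : (univ.filter (fun b => b < std g x)) = Finset.Iio (std g x) := by
    ext b; simp
  rw [rk, h1, h2, h3, Fin.card_Iio]



end Comb

section Delete
noncomputable def dcnt {m : ℕ} (w : Fin m → ℝ) (j : ℝ) : ℕ :=
  (univ.filter (fun x => rk w x = (x : ℕ) ∧ w x = j)).card

variable {n : ℕ} (w : Fin (n+1) → ℝ) (k : Fin (n+1))

lemma erase_filter_sl (x : Fin n) :
    (univ.filter (fun y => sl w y (k.succAbove x))).erase k
      = (univ.filter (fun z : Fin n => sl (w ∘ k.succAbove) z x)).image k.succAbove := by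
  ext y
  simp only [Finset.mem_erase, mem_filter, mem_univ, true_and, Finset.mem_image]
  constructor
  · rintro ⟨hne, hsl⟩
    obtain ⟨z, rfl⟩ := Fin.exists_succAbove_eq hne
    refine ⟨z, ?_, rfl⟩
    rcases hsl with h | ⟨e, hlt⟩
    · exact Or.inl h
    · exact Or.inr ⟨e, (Fin.succAbove_lt_succAbove_iff).1 hlt⟩
  · rintro ⟨z, hz, rfl⟩
    refine ⟨Fin.succAbove_ne _ _, ?_⟩
    rcases hz with h | ⟨e, hlt⟩
    · exact Or.inl h
    · exact Or.inr ⟨e, (Fin.succAbove_lt_succAbove_iff).2 hlt⟩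

lemma rk_removeNth (x : Fin n) :
    rk w (k.succAbove x) = rk (w ∘ k.succAbove) x
      + (if sl w k (k.succAbove x) then 1 else 0) := by
  have hcard : ((univ.filter (fun y => sl w y (k.succAbove x))).erase k).card
      = rk (w ∘ k.succAbove) x := by
    rw [erase_filter_sl, Finset.card_image_of_injective _ Fin.succAbove_right_injective]; rfl
  by_cases hk : sl w k (k.succAbove x)
  · have hmem : k ∈ univ.filter (fun y => sl w y (k.succAbove x)) := by simp [hk]
    have := Finset.card_erase_add_one hmem
    rw [if_pos hk]
    unfold rk at *
    omega
  · have hmem : k ∉ univ.filter (fun y => sl w y (k.succAbove x)) := by simp [hk]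
    rw [Finset.erase_eq_of_notMem hmem] at hcard
    rw [if_neg hk]
    unfold rk at *
    omega

variable {w k}

lemma fixed_removeNth (hk : rk w k = (k : ℕ)) (x : Fin n) :
    rk (w ∘ k.succAbove) x = (x : ℕ) ↔ rk w (k.succAbove x) = ((k.succAbove x) : ℕ) := by
  have hne : k.succAbove x ≠ k := Fin.succAbove_ne _ _
  have hrel := rk_removeNth w k x
  have hup : sl w k (k.succAbove x) → (k : ℕ) < rk w (k.succAbove x) := by
    intro h; have := sl_iff_rk_lt.1 h; omega
  have hdown : ¬ sl w k (k.succAbove x) → rk w (k.succAbove x) < (k : ℕ) := by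
    intro h
    rcases sl_total w (k.succAbove x) k hne with h' | h'
    · have := sl_iff_rk_lt.1 h'; omega
    · exact absurd h' h
  rcases lt_or_ge x.castSucc k with hlt | hle
  · have hxk : k.succAbove x = x.castSucc := Fin.succAbove_of_castSucc_lt _ _ hlt
    have hco : ((k.succAbove x) : ℕ) = (x : ℕ) := by rw [hxk]; simp
    have hlt' : (x : ℕ) < (k : ℕ) := by
      have := hlt; rw [Fin.lt_iff_val_lt_val] at this; simpa using this
    rw [hco]
    by_cases hs : sl w k (k.succAbove x)
    · have h1 := hup hs
      rw [if_pos hs] at hrel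
      constructor <;> intro h <;> omega
    · have h1 := hdown hs
      rw [if_neg hs] at hrel
      constructor <;> intro h <;> omega
  · have hxk : k.succAbove x = x.succ := Fin.succAbove_of_le_castSucc _ _ hle
    have hco : ((k.succAbove x) : ℕ) = (x : ℕ) + 1 := by rw [hxk]; simp
    have hle' : (k : ℕ) ≤ (x : ℕ) := by
      have := hle; rw [Fin.le_iff_val_le_val] at this; simpa using this
    rw [hco]
    by_cases hs : sl w k (k.succAbove x)
    · have h1 := hup hs
      rw [if_pos hs] at hrel
      constructor <;> intro h <;> omega
    · have h1 := hdown hs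
      rw [if_neg hs] at hrel
      constructor <;> intro h <;> omega

lemma dcnt_removeNth (hk : rk w k = (k : ℕ)) (j : ℝ) :
    dcnt w j = dcnt (w ∘ k.succAbove) j + (if w k = j then 1 else 0) := by
  have herase : (univ.filter (fun x : Fin (n+1) => rk w x = (x : ℕ) ∧ w x = j)).erase k
      = (univ.filter (fun x : Fin n => rk (w ∘ k.succAbove) x = (x : ℕ)
          ∧ (w ∘ k.succAbove) x = j)).image k.succAbove := by
    ext y
    simp only [Finset.mem_erase, mem_filter, mem_univ, true_and, Finset.mem_image]
    constructor
    · rintro ⟨hne, h1, h2⟩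
      obtain ⟨z, rfl⟩ := Fin.exists_succAbove_eq hne
      exact ⟨z, ⟨(fixed_removeNth hk z).2 h1, h2⟩, rfl⟩
    · rintro ⟨z, ⟨h1, h2⟩, rfl⟩
      exact ⟨Fin.succAbove_ne _ _, (fixed_removeNth hk z).1 h1, h2⟩
  have hcard : ((univ.filter (fun x : Fin (n+1) => rk w x = (x : ℕ) ∧ w x = j)).erase k).card
      = dcnt (w ∘ k.succAbove) j := by
    rw [herase, Finset.card_image_of_injective _ Fin.succAbove_right_injective]; rfl
  by_cases hj : w k = j
  · have hmem : k ∈ univ.filter (fun x : Fin (n+1) => rk w x = (x : ℕ) ∧ w x = j) := by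
      simp [hk, hj]
    have := Finset.card_erase_add_one hmem
    rw [if_pos hj]
    unfold dcnt at *
    omega
  · have hmem : k ∉ univ.filter (fun x : Fin (n+1) => rk w x = (x : ℕ) ∧ w x = j) := by
      simp [hj]
    rw [Finset.erase_eq_of_notMem hmem] at hcard
    rw [if_neg hj]
    unfold dcnt at *
    omega



end Delete

section Insert
noncomputable def gfun {m : ℕ} (v : Fin m → ℝ) (i : ℝ) (c : ℕ) : ℕ :=
  (univ.filter (fun x : Fin m => v x < i ∨ (v x = i ∧ (x : ℕ) < c))).card

variable {m : ℕ} (v : Fin m → ℝ) (i : ℝ)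

lemma succAbove_lt_self_iff (k : Fin (m+1)) (z : Fin m) :
    k.succAbove z < k ↔ (z : ℕ) < (k : ℕ) := by
  rcases lt_or_ge z.castSucc k with h | h
  · rw [Fin.succAbove_of_castSucc_lt _ _ h]
    rw [Fin.lt_iff_val_lt_val] at h ⊢
    simpa using h
  · rw [Fin.succAbove_of_le_castSucc _ _ h]
    rw [Fin.le_iff_val_le_val] at h
    rw [Fin.lt_iff_val_lt_val]
    simp only [Fin.val_succ, Fin.coe_castSucc] at *
    omega

lemma rk_insertNth (k : Fin (m+1)) :
    rk (Fin.insertNth k i v) k = gfun v i (k : ℕ) := by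
  have hfe : (univ.filter (fun y : Fin (m+1) => sl (Fin.insertNth k i v) y k))
      = (univ.filter (fun x : Fin m => v x < i ∨ (v x = i ∧ (x : ℕ) < (k : ℕ)))).image
          k.succAbove := by
    ext y
    simp only [mem_filter, mem_univ, true_and, Finset.mem_image]
    constructor
    · intro hsl
      have hne : y ≠ k := by
        rintro rfl
        rcases hsl with h | ⟨_, h⟩
        · exact lt_irrefl _ h
        · exact lt_irrefl _ h
      obtain ⟨z, rfl⟩ := Fin.exists_succAbove_eq hne
      refine ⟨z, ?_, rfl⟩
      simp only [sl, Fin.insertNth_apply_succAbove, Fin.insertNth_apply_same] at hsl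
      rcases hsl with h | ⟨e, hlt⟩
      · exact Or.inl h
      · exact Or.inr ⟨e, (succAbove_lt_self_iff k z).1 hlt⟩
    · rintro ⟨z, hz, rfl⟩
      simp only [sl, Fin.insertNth_apply_succAbove, Fin.insertNth_apply_same]
      rcases hz with h | ⟨e, hlt⟩
      · exact Or.inl h
      · exact Or.inr ⟨e, (succAbove_lt_self_iff k z).2 hlt⟩
  rw [rk, hfe, Finset.card_image_of_injective _ Fin.succAbove_right_injective]; rfl

lemma gfun_mono {c d : ℕ} (h : c ≤ d) : gfun v i c ≤ gfun v i d := by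
  apply Finset.card_le_card
  intro x hx
  simp only [mem_filter, mem_univ, true_and] at hx ⊢
  rcases hx with h' | ⟨e, hlt⟩
  · exact Or.inl h'
  · exact Or.inr ⟨e, by omega⟩

lemma gfun_le (c : ℕ) : gfun v i c ≤ m := by
  have := Finset.card_filter_le (univ : Finset (Fin m))
      (fun x : Fin m => v x < i ∨ (v x = i ∧ (x : ℕ) < c))
  simpa [gfun] using this

lemma gfun_add_le (c d : ℕ) : gfun v i (c + d) ≤ gfun v i c + d := by
  induction d with
  | zero => simp
  | succ d ih =>
    have hstep : gfun v i (c + d + 1) ≤ gfun v i (c + d) + 1 := by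
      by_cases hc : c + d < m
      · have hsub : (univ.filter (fun x : Fin m => v x < i ∨ (v x = i ∧ (x : ℕ) < c + d + 1)))
            ⊆ insert (⟨c + d, hc⟩ : Fin m)
              (univ.filter (fun x : Fin m => v x < i ∨ (v x = i ∧ (x : ℕ) < c + d))) := by
          intro x hx
          simp only [mem_filter, mem_univ, true_and] at hx
          rcases hx with h' | ⟨e, hlt⟩
          · exact Finset.mem_insert.2 (Or.inr (by simp only [mem_filter, mem_univ, true_and]; exact Or.inl h'))
          · by_cases hx2 : (x : ℕ) < c + d
            · exact Finset.mem_insert.2 (Or.inr (by simp only [mem_filter, mem_univ, true_and]; exact Or.inr ⟨e, hx2⟩))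
            · have : x = (⟨c + d, hc⟩ : Fin m) := Fin.ext (by simp only [Fin.val_mk]; omega)
              exact Finset.mem_insert.2 (Or.inl this)
        calc gfun v i (c + d + 1) ≤ _ := Finset.card_le_card hsub
          _ ≤ gfun v i (c + d) + 1 := Finset.card_insert_le _ _
      · have : gfun v i (c + d + 1) = gfun v i (c + d) := by
          unfold gfun
          congr 1
          apply Finset.filter_congr
          intro x _
          have := x.isLt
          constructor <;> intro h' <;>
            [rcases h' with h' | ⟨e, _⟩; rcases h' with h' | ⟨e, _⟩] <;>
            [exact Or.inl h'; exact Or.inr ⟨e, by omega⟩;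
             exact Or.inl h'; exact Or.inr ⟨e, by omega⟩]
        omega
    rw [show c + (d + 1) = c + d + 1 from rfl]
    omega

lemma gfun_step_eq {c : ℕ} (hc : c < m) (hne : v ⟨c, hc⟩ ≠ i) :
    gfun v i (c + 1) = gfun v i c := by
  unfold gfun
  congr 1
  apply Finset.filter_congr
  intro x _
  constructor <;> intro h'
  · rcases h' with h' | ⟨e, hlt⟩
    · exact Or.inl h'
    · refine Or.inr ⟨e, ?_⟩
      rcases Nat.lt_or_ge (x : ℕ) c with h2 | h2
      · exact h2
      · exfalso
        have : x = (⟨c, hc⟩ : Fin m) := Fin.ext (by simp only [Fin.val_mk]; omega)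
        exact hne (this ▸ e)
  · rcases h' with h' | ⟨e, hlt⟩
    · exact Or.inl h'
    · exact Or.inr ⟨e, by omega⟩

lemma gfun_exists : ∃ c : ℕ, c ≤ m ∧ gfun v i c = c := by
  have hex : ∃ c : ℕ, gfun v i c ≤ c := ⟨m, gfun_le v i m⟩
  set c := Nat.find hex with hc
  have hspec : gfun v i c ≤ c := Nat.find_spec hex
  have hcm : c ≤ m := Nat.find_min' hex (gfun_le v i m)
  refine ⟨c, hcm, ?_⟩
  rcases Nat.eq_zero_or_pos c with h0 | h0
  · omega
  · have hmin : ¬ gfun v i (c - 1) ≤ c - 1 := Nat.find_min hex (by omega)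
    have := gfun_mono v i (show c - 1 ≤ c by omega)
    omega

lemma gfun_run {c1 c2 c : ℕ} (h1 : gfun v i c1 = c1) (h2 : gfun v i c2 = c2)
    (hl : c1 ≤ c) (hr : c ≤ c2) : gfun v i c = c := by
  have ha := gfun_mono v i hl
  have hb := gfun_add_le v i c1 (c - c1)
  have hc' := gfun_add_le v i c (c2 - c)
  have hd := gfun_mono v i hr
  rw [show c1 + (c - c1) = c by omega] at hb
  rw [show c + (c2 - c) = c2 by omega] at hc'
  omega

lemma gfun_run_letter {c1 c2 c : ℕ} (h1 : gfun v i c1 = c1) (h2 : gfun v i c2 = c2)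
    (hl : c1 ≤ c) (hr : c < c2) (hcm : c < m) : v ⟨c, hcm⟩ = i := by
  by_contra hne
  have ha := gfun_run v i h1 h2 hl (by omega)
  have hb := gfun_run v i h1 h2 (by omega : c1 ≤ c + 1) (by omega : c + 1 ≤ c2)
  have := gfun_step_eq v i hcm hne
  omega

lemma insertNth_castSucc_eq_succ (x : Fin m) (hv : v x = i) :
    Fin.insertNth x.castSucc i v = Fin.insertNth (α := fun _ => ℝ) x.succ i v := by
  rw [Fin.insertNth_eq_iff]
  constructor
  · rw [← Fin.succAbove_succ_self]
    simp only [Fin.insertNth_apply_succAbove]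
    rw [hv]
  · funext z
    show v z = Fin.insertNth (α := fun _ => ℝ) x.succ i v (x.castSucc.succAbove z)
    rcases lt_trichotomy z x with hlt | heq | hgt
    · have h1 : x.castSucc.succAbove z = z.castSucc :=
        Fin.succAbove_of_castSucc_lt _ _ (by rwa [Fin.castSucc_lt_castSucc_iff])
      have h2 : x.succ.succAbove z = z.castSucc :=
        Fin.succAbove_of_castSucc_lt _ _ (by
          rw [Fin.castSucc_lt_iff_succ_le]
          exact Fin.succ_le_succ_iff.2 hlt.le)
      rw [h1, ← h2]
      simp only [Fin.insertNth_apply_succAbove]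
    · subst heq
      have h1 : z.castSucc.succAbove z = z.succ :=
        Fin.succAbove_of_le_castSucc _ _ (le_refl _)
      rw [h1, Fin.insertNth_apply_same, hv]
    · have h1 : x.castSucc.succAbove z = z.succ :=
        Fin.succAbove_of_le_castSucc _ _ (by
          rw [Fin.castSucc_le_castSucc_iff]; exact hgt.le)
      have h2 : x.succ.succAbove z = z.succ :=
        Fin.succAbove_of_le_castSucc _ _ (Fin.succ_le_castSucc_iff.2 hgt)
      rw [h1, ← h2]
      simp only [Fin.insertNth_apply_succAbove]

lemma insert_run (d : ℕ) : ∀ (c1 c2 : Fin (m+1)), (c2 : ℕ) = (c1 : ℕ) + d →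
    (∀ x : Fin m, (c1 : ℕ) ≤ (x : ℕ) → (x : ℕ) < (c2 : ℕ) → v x = i) →
    Fin.insertNth c1 i v = Fin.insertNth (α := fun _ => ℝ) c2 i v := by
  induction d with
  | zero =>
    intro c1 c2 h _
    have : c1 = c2 := Fin.ext (by omega)
    rw [this]
  | succ d ih =>
    intro c1 c2 h hrun
    have hc1m : (c1 : ℕ) < m := by have := c2.isLt; omega
    set x : Fin m := ⟨(c1 : ℕ), hc1m⟩ with hxdef
    have hx : v x = i := hrun x (le_refl _) (by simp only [hxdef]; omega)
    have hcast : x.castSucc = c1 := Fin.ext (by simp [hxdef])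
    have h1 : Fin.insertNth c1 i v = Fin.insertNth (α := fun _ => ℝ) x.succ i v := by
      rw [← hcast]; exact insertNth_castSucc_eq_succ v i x hx
    rw [h1]
    refine ih x.succ c2 (by simp [hxdef]; omega) ?_
    intro y hy1 hy2
    refine hrun y ?_ hy2
    simp only [Fin.val_succ, hxdef] at hy1
    omega



end Insert

section Bij
variable {m : ℕ}

/-- minimal fixed point of `w` with value `i0` (junk if none) -/
noncomputable def kmin (w : Fin (m+1) → ℝ) (i0 : ℝ) : Fin (m+1) :=
  if h : (univ.filter (fun x : Fin (m+1) => rk w x = (x : ℕ) ∧ w x = i0)).Nonempty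
  then (univ.filter (fun x : Fin (m+1) => rk w x = (x : ℕ) ∧ w x = i0)).min' h
  else 0

/-- minimal insertion position for `i0` into `v` creating a fixed point -/
noncomputable def kins (v : Fin m → ℝ) (i0 : ℝ) : Fin (m+1) :=
  (univ.filter (fun k : Fin (m+1) => gfun v i0 (k : ℕ) = (k : ℕ))).min'
    (by
      obtain ⟨c, hc, hfix⟩ := gfun_exists v i0
      exact ⟨⟨c, by omega⟩, by simp [hfix]⟩)

lemma dcnt_pos_nonempty {w : Fin (m+1) → ℝ} {i0 : ℝ} (h : 0 < dcnt w i0) :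
    (univ.filter (fun x : Fin (m+1) => rk w x = (x : ℕ) ∧ w x = i0)).Nonempty :=
  Finset.card_pos.1 h

lemma kmin_spec {w : Fin (m+1) → ℝ} {i0 : ℝ} (h : 0 < dcnt w i0) :
    rk w (kmin w i0) = ((kmin w i0 : Fin (m+1)) : ℕ) ∧ w (kmin w i0) = i0 := by
  have hne := dcnt_pos_nonempty h
  have := Finset.min'_mem _ hne
  rw [kmin, dif_pos hne]
  simpa using this

lemma kmin_min {w : Fin (m+1) → ℝ} {i0 : ℝ} (h : 0 < dcnt w i0) {x : Fin (m+1)}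
    (hx : rk w x = (x : ℕ) ∧ w x = i0) : kmin w i0 ≤ x := by
  have hne := dcnt_pos_nonempty h
  rw [kmin, dif_pos hne]
  exact Finset.min'_le _ _ (by simp [hx.1, hx.2])

lemma kins_nonempty (v : Fin m → ℝ) (i0 : ℝ) :
    (univ.filter (fun k : Fin (m+1) => gfun v i0 (k : ℕ) = (k : ℕ))).Nonempty := by
  obtain ⟨c, hc, hfix⟩ := gfun_exists v i0
  exact ⟨⟨c, by omega⟩, by simp [hfix]⟩

lemma kins_spec (v : Fin m → ℝ) (i0 : ℝ) :
    gfun v i0 ((kins v i0 : Fin (m+1)) : ℕ) = ((kins v i0 : Fin (m+1)) : ℕ) := by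
  have := Finset.min'_mem
    (univ.filter (fun k : Fin (m+1) => gfun v i0 (k : ℕ) = (k : ℕ))) (kins_nonempty v i0)
  simpa [kins] using this

lemma kins_min (v : Fin m → ℝ) (i0 : ℝ) {c : Fin (m+1)}
    (hc : gfun v i0 (c : ℕ) = (c : ℕ)) : kins v i0 ≤ c :=
  Finset.min'_le _ _ (by simp [hc])

lemma gfun_eq_rk {v : Fin m → ℝ} {i0 : ℝ} {x : Fin m} (hvx : v x = i0) :
    gfun v i0 (x : ℕ) = rk v x := by
  unfold gfun rk
  congr 1
  apply Finset.filter_congr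
  intro y _
  rw [sl, hvx]
  constructor
  · rintro (h | ⟨e, hlt⟩)
    · exact Or.inl h
    · exact Or.inr ⟨e, by rwa [Fin.lt_iff_val_lt_val]⟩
  · rintro (h | ⟨e, hlt⟩)
    · exact Or.inl h
    · exact Or.inr ⟨e, by rwa [Fin.lt_iff_val_lt_val] at hlt⟩

/-- the inserted word has the insertion point as a fixed point -/
lemma insert_fixed (v : Fin m → ℝ) (i0 : ℝ) :
    rk (Fin.insertNth (kins v i0) i0 v) (kins v i0) = ((kins v i0 : Fin (m+1)) : ℕ) := by
  rw [rk_insertNth]; exact kins_spec v i0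

/-- MIN1: inserting at the canonical position, the insertion point is the *minimal*
fixed point with value `i0`. -/
lemma kmin_insert (v : Fin m → ℝ) (i0 : ℝ) :
    kmin (Fin.insertNth (kins v i0) i0 v) i0 = kins v i0 := by
  set kk := kins v i0 with hkk
  set w := Fin.insertNth (α := fun _ => ℝ) kk i0 v with hw
  have hfix : rk w kk = (kk : ℕ) := insert_fixed v i0
  have hval : w kk = i0 := by rw [hw, Fin.insertNth_apply_same]
  have hcomp : w ∘ kk.succAbove = v := by
    rw [hw]; exact Fin.insertNth_comp_succAbove _ _ _
  have hpos : 0 < dcnt w i0 := by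
    rw [dcnt]
    apply Finset.card_pos.2
    exact ⟨kk, by simp [hfix, hval]⟩
  have hmem := kmin_spec hpos
  refine le_antisymm (kmin_min hpos ⟨hfix, hval⟩) ?_
  by_contra hlt
  push_neg at hlt
  set x' := kmin w i0 with hx'
  have hx'm : (x' : ℕ) < m := by
    have h1 : (x' : ℕ) < (kk : ℕ) := hlt
    have h2 : (kk : ℕ) ≤ m := by omega
    omega
  set z : Fin m := ⟨(x' : ℕ), hx'm⟩ with hz
  have hcast : z.castSucc = x' := Fin.ext (by simp [hz])
  have hsA : kk.succAbove z = x' := by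
    rw [Fin.succAbove_of_castSucc_lt _ _ (by rw [hcast]; exact hlt), hcast]
  have hzfix : rk v z = (z : ℕ) := by
    have := (fixed_removeNth hfix z)
    rw [hcomp] at this
    rw [this, hsA]
    simp [hz, hmem.1]
  have hzval : v z = i0 := by
    have : v z = w (kk.succAbove z) := by rw [← hcomp]; rfl
    rw [this, hsA, hmem.2]
  have hg : gfun v i0 (z.castSucc : ℕ) = ((z.castSucc : Fin (m+1)) : ℕ) := by
    have h1 := gfun_eq_rk hzval
    have h2 : ((z.castSucc : Fin (m+1)) : ℕ) = (z : ℕ) := by simp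
    rw [h2]
    rw [h1, hzfix]
  have := kins_min v i0 hg
  rw [hcast] at this
  exact absurd this (not_le.2 hlt)

/-- MIN2: starting from a word with minimal `i0`-fixed point `k`, the canonical
insertion reconstructs `w`. -/
lemma insert_kmin {w : Fin (m+1) → ℝ} {i0 : ℝ} (hpos : 0 < dcnt w i0) :
    Fin.insertNth (kins (w ∘ (kmin w i0).succAbove) i0) i0 (w ∘ (kmin w i0).succAbove) = w := by
  set k := kmin w i0 with hk
  set v := w ∘ k.succAbove with hv
  have hmem := kmin_spec hpos
  have hww : Fin.insertNth k i0 v = w := by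
    rw [← hmem.2, hv]
    exact Fin.insertNth_self_removeNth _ _
  have hkK : gfun v i0 (k : ℕ) = (k : ℕ) := by
    have := rk_insertNth v i0 k
    rw [hww] at this
    rw [← this, hmem.1]
  set kk := kins v i0 with hkk
  have hle : kk ≤ k := kins_min v i0 hkK
  have hKkk : gfun v i0 (kk : ℕ) = (kk : ℕ) := kins_spec v i0
  rcases eq_or_lt_of_le hle with heq | hlt
  · rw [heq]; exact hww
  · exfalso
    have hrun : ∀ x : Fin m, (kk : ℕ) ≤ (x : ℕ) → (x : ℕ) < (k : ℕ) → v x = i0 := by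
      intro x h1 h2
      have := gfun_run_letter v i0 hKkk hkK h1 h2 x.isLt
      have hx : (⟨(x : ℕ), x.isLt⟩ : Fin m) = x := Fin.ext rfl
      rwa [hx] at this
    have hins : Fin.insertNth kk i0 v = Fin.insertNth (α := fun _ => ℝ) k i0 v :=
      insert_run v i0 ((k : ℕ) - (kk : ℕ)) kk k (by omega) hrun
    have hwkk : Fin.insertNth kk i0 v = w := by rw [hins, hww]
    have hfixkk : rk w kk = (kk : ℕ) := by
      rw [← hwkk, rk_insertNth]; exact hKkk
    have hvalkk : w kk = i0 := by rw [← hwkk, Fin.insertNth_apply_same]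
    have := kmin_min hpos ⟨hfixkk, hvalkk⟩
    rw [← hk] at this
    exact absurd hlt (not_lt.2 this)



end Bij

section Key
/-- base case: total weight of all 𝕀-words is 1 -/
lemma tsum_words (𝕀 : Set ℝ) (p : ℝ → ℝ≥0∞) (hp : ∑' j : 𝕀, p j = 1) :
    ∀ nn : ℕ, ∑' w : {w : Fin nn → ℝ // ∀ x, w x ∈ 𝕀}, ∏ x, p (w.1 x) = 1 := by
  intro nn
  induction nn with
  | zero =>
    have hU : ∀ w : {w : Fin 0 → ℝ // ∀ x, w x ∈ 𝕀},
        w = ⟨fun x => x.elim0, fun x => x.elim0⟩ := by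
      intro w
      apply Subtype.ext
      funext x
      exact x.elim0
    rw [tsum_eq_single (⟨fun x => x.elim0, fun x => x.elim0⟩ :
        {w : Fin 0 → ℝ // ∀ x, w x ∈ 𝕀})]
    · simp
    · intro b hb
      exact absurd (hU b) hb
  | succ nn ih =>
    set E : {w : Fin (nn+1) → ℝ // ∀ x, w x ∈ 𝕀} ≃
        𝕀 × {v : Fin nn → ℝ // ∀ x, v x ∈ 𝕀} :=
      { toFun := fun w => (⟨w.1 0, w.2 0⟩, ⟨fun x => w.1 x.succ, fun x => w.2 x.succ⟩)
        invFun := fun q => ⟨Fin.cons q.1.1 q.2.1, by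
          intro x
          refine Fin.cases ?_ ?_ x
          · simpa using q.1.2
          · intro y; simpa using q.2.2 y⟩
        left_inv := by
          intro w
          apply Subtype.ext
          exact Fin.cons_self_tail w.1
        right_inv := by
          rintro ⟨a, v⟩
          refine Prod.ext ?_ ?_
          · apply Subtype.ext; simp
          · apply Subtype.ext; funext x; simp } with hE
    have h1 : ∑' w : {w : Fin (nn+1) → ℝ // ∀ x, w x ∈ 𝕀}, ∏ x, p (w.1 x)
        = ∑' q : 𝕀 × {v : Fin nn → ℝ // ∀ x, v x ∈ 𝕀},
            ∏ x, p ((E.symm q).1 x) := (E.symm.tsum_eq _).symm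
    rw [h1]
    have h2 : ∀ q : 𝕀 × {v : Fin nn → ℝ // ∀ x, v x ∈ 𝕀},
        ∏ x, p ((E.symm q).1 x) = p q.1 * ∏ x, p (q.2.1 x) := by
      rintro ⟨a, v⟩
      rw [show (E.symm (a, v)).1 = Fin.cons a.1 v.1 from rfl]
      rw [Fin.prod_univ_succ]
      simp
    calc ∑' q : 𝕀 × {v : Fin nn → ℝ // ∀ x, v x ∈ 𝕀}, ∏ x, p ((E.symm q).1 x)
        = ∑' q : 𝕀 × {v : Fin nn → ℝ // ∀ x, v x ∈ 𝕀}, p q.1 * ∏ x, p (q.2.1 x) :=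
          tsum_congr h2
      _ = ∑' (a : 𝕀) (v : {v : Fin nn → ℝ // ∀ x, v x ∈ 𝕀}), p a * ∏ x, p (v.1 x) :=
          ENNReal.tsum_prod (f := fun (a : 𝕀) (v : {v : Fin nn → ℝ // ∀ x, v x ∈ 𝕀}) => p a * ∏ x, p (v.1 x))
      _ = ∑' (a : 𝕀), p a * ∑' v : {v : Fin nn → ℝ // ∀ x, v x ∈ 𝕀}, ∏ x, p (v.1 x) :=
          tsum_congr fun a => ENNReal.tsum_mul_left
      _ = 1 := by
          rw [ih]
          simp only [mul_one]
          exact hp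

/-- fixed point counts for distinct values are disjoint, bounding their sum -/
lemma sum_dcnt_le (nn r : ℕ) (w : Fin nn → ℝ) (i : Fin r → ℝ)
    (hinj : Function.Injective i) : ∑ t, dcnt w (i t) ≤ nn := by
  have hdisj : ∀ t1 ∈ (univ : Finset (Fin r)), ∀ t2 ∈ univ, t1 ≠ t2 →
      Disjoint (univ.filter (fun x : Fin nn => rk w x = (x : ℕ) ∧ w x = i t1))
        (univ.filter (fun x : Fin nn => rk w x = (x : ℕ) ∧ w x = i t2)) := by
    intro t1 _ t2 _ hne
    rw [Finset.disjoint_left]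
    intro x hx1 hx2
    simp only [mem_filter, mem_univ, true_and] at hx1 hx2
    exact absurd (hinj (hx1.2 ▸ hx2.2 ▸ rfl : i t1 = i t2)) hne
  calc ∑ t, dcnt w (i t)
      = (univ.biUnion (fun t : Fin r =>
          univ.filter (fun x : Fin nn => rk w x = (x : ℕ) ∧ w x = i t))).card :=
        (Finset.card_biUnion hdisj).symm
    _ ≤ (univ : Finset (Fin nn)).card := Finset.card_le_card (Finset.subset_univ _)
    _ = nn := by simp



set_option maxHeartbeats 1000000 in
lemma step_equiv (𝕀 : Set ℝ) (p : ℝ → ℝ≥0∞) (mm r : ℕ) (i : Fin r → ℝ) (hi : ∀ t, i t ∈ 𝕀)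
    (hinj : Function.Injective i) (l : Fin r → ℕ) (t0 : Fin r) (ht0 : 0 < l t0) :
    ∃ e : {w : Fin (mm+1) → ℝ // (∀ x, w x ∈ 𝕀) ∧ ∀ t, l t ≤ dcnt w (i t)} ≃
        {v : Fin mm → ℝ // (∀ x, v x ∈ 𝕀) ∧
          ∀ t, Function.update l t0 (l t0 - 1) t ≤ dcnt v (i t)},
      ∀ w, ∏ x, p (w.1 x) = p (i t0) * ∏ x, p ((e w).1 x) := by
  set i0 := i t0 with hi0def
  set l' : Fin r → ℕ := Function.update l t0 (l t0 - 1) with hl'def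
  have hl'0 : l' t0 = l t0 - 1 := by rw [hl'def, Function.update_self]
  have hl'ne : ∀ t, t ≠ t0 → l' t = l t := fun t ht => by
    rw [hl'def, Function.update_of_ne ht]
  have hi0ne : ∀ t, t ≠ t0 → ¬ (i0 = i t) := by
    intro t ht h
    exact ht (hinj h.symm)
  have hpos : ∀ w : {w : Fin (mm+1) → ℝ //
      (∀ x, w x ∈ 𝕀) ∧ ∀ t, l t ≤ dcnt w (i t)}, 0 < dcnt w.1 i0 :=
    fun w => lt_of_lt_of_le ht0 (w.2.2 t0)
  have hFprop : ∀ w : {w : Fin (mm+1) → ℝ // (∀ x, w x ∈ 𝕀) ∧ ∀ t, l t ≤ dcnt w (i t)},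
      (∀ x, (w.1 ∘ (kmin w.1 i0).succAbove) x ∈ 𝕀) ∧
        ∀ t, l' t ≤ dcnt (w.1 ∘ (kmin w.1 i0).succAbove) (i t) := by
    intro w
    refine ⟨fun x => w.2.1 _, fun t => ?_⟩
    have hspec := kmin_spec (hpos w)
    have hD := dcnt_removeNth hspec.1 (i t)
    rw [hspec.2] at hD
    by_cases ht : t = t0
    · rw [ht] at hD ⊢
      rw [if_pos rfl] at hD
      have := w.2.2 t0
      rw [hl'0]
      omega
    · rw [if_neg (hi0ne t ht)] at hD
      have := w.2.2 t
      rw [hl'ne t ht]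
      omega
  have hGprop : ∀ v : {v : Fin mm → ℝ // (∀ x, v x ∈ 𝕀) ∧ ∀ t, l' t ≤ dcnt v (i t)},
      (∀ y, (Fin.insertNth (α := fun _ => ℝ) (kins v.1 i0) i0 v.1) y ∈ 𝕀) ∧
        ∀ t, l t ≤ dcnt (Fin.insertNth (α := fun _ => ℝ) (kins v.1 i0) i0 v.1) (i t) := by
    intro v
    refine ⟨?_, fun t => ?_⟩
    · intro y
      rcases eq_or_ne y (kins v.1 i0) with rfl | hne
      · rw [Fin.insertNth_apply_same]
        exact hi t0
      · obtain ⟨z, rfl⟩ := Fin.exists_succAbove_eq hne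
        rw [Fin.insertNth_apply_succAbove]
        exact v.2.1 z
    · have hfix := insert_fixed v.1 i0
      have hD := dcnt_removeNth hfix (i t)
      rw [Fin.insertNth_comp_succAbove, Fin.insertNth_apply_same] at hD
      by_cases ht : t = t0
      · rw [ht] at hD ⊢
        rw [if_pos rfl] at hD
        have := v.2.2 t0
        rw [hl'0] at this
        omega
      · rw [if_neg (hi0ne t ht)] at hD
        have := v.2.2 t
        rw [hl'ne t ht] at this
        omega
  have hweight : ∀ w : {w : Fin (mm+1) → ℝ // (∀ x, w x ∈ 𝕀) ∧ ∀ t, l t ≤ dcnt w (i t)},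
      ∏ x, p (w.1 x) = p (i t0) * ∏ x, p ((w.1 ∘ (kmin w.1 i0).succAbove) x) := by
    intro w
    have hsA := Fin.prod_univ_succAbove (fun x => p (w.1 x)) (kmin w.1 i0)
    rw [hsA, (kmin_spec (hpos w)).2]
    rfl
  refine ⟨⟨fun w => ⟨w.1 ∘ (kmin w.1 i0).succAbove, hFprop w⟩,
      fun v => ⟨Fin.insertNth (α := fun _ => ℝ) (kins v.1 i0) i0 v.1, hGprop v⟩, ?_, ?_⟩, ?_⟩
  · intro w
    apply Subtype.ext
    exact insert_kmin (hpos w)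
  · intro v
    apply Subtype.ext
    show (Fin.insertNth (α := fun _ => ℝ) (kins v.1 i0) i0 v.1) ∘
        (kmin (Fin.insertNth (α := fun _ => ℝ) (kins v.1 i0) i0 v.1) i0).succAbove = v.1
    rw [kmin_insert v.1 i0]
    exact Fin.insertNth_comp_succAbove _ _ _
  · exact hweight

set_option maxHeartbeats 1000000 in
lemma key (𝕀 : Set ℝ) (p : ℝ → ℝ≥0∞) (hp : ∑' j : 𝕀, p j = 1) :
    ∀ (L nn r : ℕ) (i : Fin r → ℝ), (∀ t, i t ∈ 𝕀) → Function.Injective i →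
    ∀ l : Fin r → ℕ, (∑ t, l t = L) →
    (∑' w : {w : Fin nn → ℝ // (∀ x, w x ∈ 𝕀) ∧ ∀ t, l t ≤ dcnt w (i t)}, ∏ x, p (w.1 x))
      = if L ≤ nn then ∏ t, p (i t) ^ l t else 0 := by
  intro L
  induction L with
  | zero =>
    intro nn r i hi hinj l hl
    have hl0 : ∀ t, l t = 0 := fun t => Finset.sum_eq_zero_iff.1 hl t (mem_univ t)
    have heq : ∀ w : Fin nn → ℝ,
        ((∀ x, w x ∈ 𝕀) ∧ ∀ t, l t ≤ dcnt w (i t)) ↔ (∀ x, w x ∈ 𝕀) := by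
      intro w
      constructor
      · exact fun h => h.1
      · exact fun h => ⟨h, fun t => by rw [hl0 t]; omega⟩
    rw [if_pos (Nat.zero_le nn)]
    have hprod : ∏ t, p (i t) ^ l t = 1 :=
      Finset.prod_eq_one (fun t _ => by rw [hl0 t, pow_zero])
    rw [hprod, ← tsum_words 𝕀 p hp nn]
    exact (Equiv.subtypeEquivRight heq).tsum_eq (fun b => ∏ x, p (b.1 x))
  | succ L ih =>
    intro nn r i hi hinj l hl
    have hex : ∃ t0, 0 < l t0 := by
      by_contra h
      push_neg at h
      have : ∑ t, l t = 0 := Finset.sum_eq_zero (fun t _ => by have := h t; omega)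
      omega
    obtain ⟨t0, ht0⟩ := hex
    by_cases hn : L + 1 ≤ nn
    · obtain ⟨mm, rfl⟩ : ∃ mm, nn = mm + 1 := ⟨nn - 1, by omega⟩
      rw [if_pos hn]
      set l' : Fin r → ℕ := Function.update l t0 (l t0 - 1) with hl'def
      have hl'0 : l' t0 = l t0 - 1 := by rw [hl'def, Function.update_self]
      have hl'ne : ∀ t, t ≠ t0 → l' t = l t := fun t ht => by
        rw [hl'def, Function.update_of_ne ht]
      have hl'sum : ∑ t, l' t = L := by
        have h1 : ∑ t, l t = l t0 + ∑ t ∈ univ.erase t0, l t :=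
          (Finset.add_sum_erase _ _ (mem_univ t0)).symm
        have h2 : ∑ t, l' t = l' t0 + ∑ t ∈ univ.erase t0, l' t :=
          (Finset.add_sum_erase _ _ (mem_univ t0)).symm
        have h3 : ∑ t ∈ univ.erase t0, l' t = ∑ t ∈ univ.erase t0, l t :=
          Finset.sum_congr rfl (fun t ht => hl'ne t (Finset.ne_of_mem_erase ht))
        rw [hl'0, h3] at h2
        omega
      have hIH := ih mm r i hi hinj l' hl'sum
      rw [if_pos (by omega : L ≤ mm)] at hIH
      obtain ⟨e, he⟩ := step_equiv 𝕀 p mm r i hi hinj l t0 ht0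
      have hprodstep : p (i t0) * ∏ t, p (i t) ^ l' t = ∏ t, p (i t) ^ l t := by
        have h1 : ∏ t, p (i t) ^ l t
            = p (i t0) ^ l t0 * ∏ t ∈ univ.erase t0, p (i t) ^ l t :=
          (Finset.mul_prod_erase _ _ (mem_univ t0)).symm
        have h2 : ∏ t, p (i t) ^ l' t
            = p (i t0) ^ l' t0 * ∏ t ∈ univ.erase t0, p (i t) ^ l' t :=
          (Finset.mul_prod_erase _ _ (mem_univ t0)).symm
        have h3 : ∏ t ∈ univ.erase t0, p (i t) ^ l' t
            = ∏ t ∈ univ.erase t0, p (i t) ^ l t :=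
          Finset.prod_congr rfl (fun t ht => by rw [hl'ne t (Finset.ne_of_mem_erase ht)])
        have h4 : p (i t0) * p (i t0) ^ l' t0 = p (i t0) ^ l t0 := by
          rw [hl'0, ← pow_succ']
          congr 1
          omega
        rw [h1, h2, h3, ← mul_assoc, h4]
      calc (∑' w : {w : Fin (mm+1) → ℝ // (∀ x, w x ∈ 𝕀) ∧ ∀ t, l t ≤ dcnt w (i t)},
              ∏ x, p (w.1 x))
          = ∑' w : {w : Fin (mm+1) → ℝ // (∀ x, w x ∈ 𝕀) ∧ ∀ t, l t ≤ dcnt w (i t)},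
              p (i t0) * ∏ x, p ((e w).1 x) := tsum_congr he
        _ = p (i t0) * ∑' w : {w : Fin (mm+1) → ℝ // (∀ x, w x ∈ 𝕀) ∧ ∀ t, l t ≤ dcnt w (i t)},
              ∏ x, p ((e w).1 x) := ENNReal.tsum_mul_left
        _ = p (i t0) * ∑' v : {v : Fin mm → ℝ // (∀ x, v x ∈ 𝕀) ∧ ∀ t, l' t ≤ dcnt v (i t)},
              ∏ x, p (v.1 x) := by
            rw [e.tsum_eq (fun v => ∏ x, p (v.1 x))]
        _ = p (i t0) * ∏ t, p (i t) ^ l' t := by rw [hIH]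
        _ = ∏ t, p (i t) ^ l t := hprodstep
    · rw [if_neg hn]
      have hempty : IsEmpty {w : Fin nn → ℝ // (∀ x, w x ∈ 𝕀) ∧ ∀ t, l t ≤ dcnt w (i t)} := by
        refine ⟨fun w => ?_⟩
        have hle := sum_dcnt_le nn r w.1 i hinj
        have hge : ∑ t, l t ≤ ∑ t, dcnt w.1 (i t) := Finset.sum_le_sum (fun t _ => w.2.2 t)
        omega
      exact tsum_empty



end Key

end Std8

open Std8 Finset

set_option maxHeartbeats 1000000

/-- let `G = (G_1, …, G_n)` be i.i.d. random variables with values in the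
countable set `𝕀 ⊆ ℝ`, with `p_i = μ {i}`, and for `i ∈ 𝕀` let `D_i` be the number of fixed
points `x` of `std(G)` with `G_x = i`. For pairwise distinct `i_1, …, i_r ∈ 𝕀` and
`l_1, …, l_r ≥ 0`, `P(D_{i_1} ≥ l_1, …, D_{i_r} ≥ l_r)` equals `p_{i_1}^{l_1} ⋯ p_{i_r}^{l_r}`
if `l_1 + ⋯ + l_r ≤ n`, and `0` otherwise. -/
theorem stmt8 {Ω : Type*} [MeasurableSpace Ω] (P : Measure Ω) [IsProbabilityMeasure P]
    (𝕀 : Set ℝ) (h𝕀 : 𝕀.Countable)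
    (μ : Measure ℝ) [IsProbabilityMeasure μ] (hμ : μ 𝕀ᶜ = 0)
    (n : ℕ) (G : Fin n → Ω → ℝ) (hmeas : ∀ x, Measurable (G x))
    (hindep : iIndepFun G P)
    (hdist : ∀ x, Measure.map (G x) P = μ)
    (std : (Fin n → ℝ) → Equiv.Perm (Fin n))
    (hstd : ∀ (g : Fin n → ℝ) (j k : Fin n),
      std g j < std g k ↔ (g j < g k ∨ (g j = g k ∧ j < k)))
    (r : ℕ) (i : Fin r → ℝ) (hi : ∀ t, i t ∈ 𝕀) (hdist' : Function.Injective i)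
    (l : Fin r → ℕ) :
    P {ω | ∀ t : Fin r,
        l t ≤ Set.ncard {x : Fin n | std (fun y => G y ω) x = x ∧ G x ω = i t}} =
      if ∑ t, l t ≤ n then ∏ t, μ {i t} ^ l t else 0 := by
  classical
  haveI := h𝕀.to_subtype
  -- step 0: rewrite the event via `dcnt`
  have hncard : ∀ (g : Fin n → ℝ) (t : Fin r),
      Set.ncard {x : Fin n | std g x = x ∧ g x = i t} = dcnt g (i t) := by
    intro g t
    have hset : {x : Fin n | std g x = x ∧ g x = i t}
        = ↑(univ.filter (fun x : Fin n => rk g x = (x : ℕ) ∧ g x = i t)) := by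
      ext x
      simp only [Set.mem_setOf_eq, Finset.coe_filter, mem_univ, true_and, Set.mem_setOf_eq]
      constructor
      · rintro ⟨h1, h2⟩
        refine ⟨?_, h2⟩
        rw [← std_eq_rk std hstd g x, h1]
      · rintro ⟨h1, h2⟩
        refine ⟨?_, h2⟩
        have := std_eq_rk std hstd g x
        rw [h1] at this
        exact Fin.ext this
    rw [hset, Set.ncard_coe_finset]
    rfl
  have hev : {ω | ∀ t : Fin r,
        l t ≤ Set.ncard {x : Fin n | std (fun y => G y ω) x = x ∧ G x ω = i t}}
      = {ω | ∀ t : Fin r, l t ≤ dcnt (fun y => G y ω) (i t)} := by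
    ext ω
    simp only [Set.mem_setOf_eq]
    apply forall_congr'
    intro t
    rw [hncard (fun y => G y ω) t]
  rw [hev]
  -- the "good" event decomposition
  set A := {w : Fin n → ℝ // (∀ x, w x ∈ 𝕀) ∧ ∀ t, l t ≤ dcnt w (i t)} with hA
  haveI : Countable (Fin n → ↥𝕀) := inferInstance
  haveI : Countable A := by
    have hinj : Function.Injective (fun (w : A) => (fun x => (⟨w.1 x, w.2.1 x⟩ : ↥𝕀))) := by
      intro w w' h
      apply Subtype.ext
      funext x
      have := congrFun h x
      exact congrArg Subtype.val this
    exact hinj.countable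
  set Egood := ⋃ (w : A), ⋂ x, (G x) ⁻¹' {w.1 x} with hEgood
  set Ebad := ⋃ x, (G x) ⁻¹' 𝕀ᶜ with hEbad
  have hsub1 : {ω | ∀ t : Fin r, l t ≤ dcnt (fun y => G y ω) (i t)} ⊆ Egood ∪ Ebad := by
    intro ω hω
    by_cases hall : ∀ x, G x ω ∈ 𝕀
    · left
      refine Set.mem_iUnion.2 ⟨⟨fun y => G y ω, hall, hω⟩, ?_⟩
      exact Set.mem_iInter.2 (fun x => rfl)
    · right
      push_neg at hall
      obtain ⟨x, hx⟩ := hall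
      exact Set.mem_iUnion.2 ⟨x, hx⟩
  have hsub2 : Egood ⊆ {ω | ∀ t : Fin r, l t ≤ dcnt (fun y => G y ω) (i t)} := by
    intro ω hω
    obtain ⟨w, hw⟩ := Set.mem_iUnion.1 hω
    have hwω : (fun y => G y ω) = w.1 := by
      funext y
      exact Set.mem_iInter.1 hw y
    intro t
    rw [hwω]
    exact w.2.2 t
  have hbad : P Ebad = 0 := by
    rw [hEbad]
    apply measure_iUnion_null
    intro x
    have : P ((G x) ⁻¹' 𝕀ᶜ) = μ 𝕀ᶜ := by
      rw [← hdist x, Measure.map_apply (hmeas x) h𝕀.measurableSet.compl]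
    rw [this, hμ]
  have hPE : P {ω | ∀ t : Fin r, l t ≤ dcnt (fun y => G y ω) (i t)} = P Egood := by
    apply le_antisymm
    · calc P {ω | ∀ t : Fin r, l t ≤ dcnt (fun y => G y ω) (i t)}
          ≤ P (Egood ∪ Ebad) := measure_mono hsub1
        _ ≤ P Egood + P Ebad := measure_union_le _ _
        _ = P Egood := by rw [hbad, add_zero]
    · exact measure_mono hsub2
  rw [hPE]
  -- compute P Egood
  have hdisj : Pairwise (Function.onFun Disjoint (fun (w : A) => ⋂ x, (G x) ⁻¹' {w.1 x})) := by
    intro w w' hne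
    rw [Function.onFun]
    apply Set.disjoint_left.2
    intro ω hω hω'
    apply hne
    apply Subtype.ext
    funext x
    have h1 := Set.mem_iInter.1 hω x
    have h2 := Set.mem_iInter.1 hω' x
    simp only [Set.mem_preimage, Set.mem_singleton_iff] at h1 h2
    rw [← h1, ← h2]
  have hmeas' : ∀ w : A, MeasurableSet (⋂ x, (G x) ⁻¹' {w.1 x}) :=
    fun w => MeasurableSet.iInter (fun x => (hmeas x) (measurableSet_singleton _))
  have hPgood : P Egood = ∑' w : A, ∏ x, μ {w.1 x} := by
    rw [hEgood, measure_iUnion hdisj hmeas']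
    apply tsum_congr
    intro w
    have hind := hindep.meas_iInter (s := fun x => (G x) ⁻¹' {w.1 x})
      (fun x => ⟨{w.1 x}, measurableSet_singleton _, rfl⟩)
    rw [hind]
    apply Finset.prod_congr rfl
    intro x _
    rw [← hdist x, Measure.map_apply (hmeas x) (measurableSet_singleton _)]
  rw [hPgood]
  -- total mass of singletons is 1
  have hp1 : ∑' j : 𝕀, μ {(j : ℝ)} = 1 := by
    have hI : 𝕀 = ⋃ j : 𝕀, {(j : ℝ)} := by
      ext c
      simp only [Set.mem_iUnion, Set.mem_singleton_iff]
      constructor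
      · intro hc; exact ⟨⟨c, hc⟩, rfl⟩
      · rintro ⟨j, rfl⟩; exact j.2
    have hdisjI : Pairwise (Function.onFun Disjoint (fun (j : 𝕀) => ({(j : ℝ)} : Set ℝ))) := by
      intro j j' hne
      rw [Function.onFun]
      simp only [Set.disjoint_singleton]
      exact fun h => hne (Subtype.ext h)
    have h1 : μ (⋃ j : 𝕀, {(j : ℝ)}) = ∑' j : 𝕀, μ {(j : ℝ)} :=
      measure_iUnion hdisjI (fun j => measurableSet_singleton _)
    rw [← hI] at h1
    have h2 : μ 𝕀 = 1 := by
      have := measure_add_measure_compl (μ := μ) h𝕀.measurableSet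
      rw [hμ, add_zero, measure_univ] at this
      exact this
    rw [← h1, h2]
  exact key 𝕀 (fun c => μ {c}) hp1 (∑ t, l t) n r i hi hdist' l rfl
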